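/- For any density operator ρ on the full qubit system, tr(P(V',G) ρ) = tr(|G'⟩⟨G'| ρ̂^{V'}), where ρ̂ = U ρ U with U = ∏_{(i,j)∈Ẽ} CZ^{(i,j)}, and ρ̂^{V'} is the partial trace of ρ̂ onto the qubits V'. -/

import Mathlib

open scoped Classical ComplexOrder
open Matrix

noncomputable section

namespace GraphStates

variable {V : Type} [Fintype V] [DecidableEq V]

/-- Matrices acting on the `|V|`-qubit Hilbert space `(ℂ²)^{⊗V}`,
indexed by computational basis states `V → Bool`. -/
abbrev QMat (V : Type) := Matrix (V → Bool) (V → Bool) ℂ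

/-- Pauli `Z` on qubit `i`. -/
def pauliZ (i : V) : QMat V :=
  Matrix.diagonal fun f => if f i then -1 else 1

/-- Pauli `X` on qubit `i`. -/
def pauliX (i : V) : QMat V :=
  Matrix.of fun f g => if f = Function.update g i (!g i) then 1 else 0

/-- Product of Pauli `Z` over a set `s` of qubits. -/
def zOn (s : Finset V) : QMat V :=
  Matrix.diagonal fun f => (-1 : ℂ) ^ (s.filter fun v => f v = true).card

/-- Controlled-`Z` gate on qubits `i`, `j`. -/
def czMat (i j : V) : QMat V :=
  Matrix.diagonal fun f => if f i = true ∧ f j = true then -1 else 1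

/-- The stabilizer generator `S_i = X_i ∏_{j ∈ N_i} Z_j` of the graph state of `G`. -/
def stab (G : SimpleGraph V) (i : V) : QMat V :=
  pauliX i * zOn (Finset.univ.filter fun j => G.Adj i j)

/-- The state `|+⟩^{⊗ V}`. -/
def plusVec : (V → Bool) → ℂ := fun _ => ((Real.sqrt 2 : ℂ))⁻¹ ^ Fintype.card V

/-- The product of the controlled-`Z` gates over all edges of `G`
(a single diagonal matrix, since `CZ` gates are diagonal and commute). -/
def czProd (G : SimpleGraph V) : QMat V :=
  Matrix.diagonal fun f =>
    (-1 : ℂ) ^ ((Finset.univ : Finset (Sym2 V)).filter fun e =>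
        e ∈ G.edgeSet ∧ ∀ v ∈ e, f v = true).card

/-- The graph state `|G⟩ = ∏_{(i,j) ∈ E} CZ^{(i,j)} |+⟩^{⊗n}` as a vector. -/
def graphStateVec (G : SimpleGraph V) : (V → Bool) → ℂ :=
  czProd G *ᵥ plusVec

/-- Outer product `|v⟩⟨v|`. -/
def outer {ι : Type} (v : ι → ℂ) : Matrix ι ι ℂ :=
  Matrix.of fun f g => v f * (starRingEnd ℂ) (v g)

/-- Product of a family of matrices over a finite set (in a fixed enumeration order). -/
def prodOn (s : Finset V) (f : V → QMat V) : QMat V :=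
  (s.toList.map f).prod

/-- The partial stabilizer projector `P(U,G) = ∏_{v ∈ U} (I + S_v)/2`. -/
def stabProj (G : SimpleGraph V) (s : Finset V) : QMat V :=
  prodOn s fun v => (2 : ℂ)⁻¹ • (1 + stab G v)

/-- Combine assignments on `s` and on its complement into a global assignment. -/
def merge (s : Finset V) (a : {v // v ∈ s} → Bool) (b : {v // v ∉ s} → Bool) : V → Bool :=
  fun v => if h : v ∈ s then a ⟨v, h⟩ else b ⟨v, h⟩

/-- Partial trace onto the qubits in `s` (tracing out the complement). -/
def ptrace (s : Finset V) (ρ : QMat V) :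
    Matrix ({v // v ∈ s} → Bool) ({v // v ∈ s} → Bool) ℂ :=
  Matrix.of fun a b => ∑ h : {v // v ∉ s} → Bool, ρ (merge s a h) (merge s b h)

/-- Embed an operator on the qubits in `s` into the full system, tensoring with
the identity on the remaining qubits: `A ↦ A ⊗ I`. -/
def embedOp (s : Finset V)
    (A : Matrix ({v // v ∈ s} → Bool) ({v // v ∈ s} → Bool) ℂ) : QMat V :=
  Matrix.of fun f g =>
    if ∀ v, v ∉ s → f v = g v then A (fun v => f v.1) (fun v => g v.1) else 0

/-- The subgraph of `G` induced by the vertex subset `s`. -/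
def inducedGraph (G : SimpleGraph V) (s : Finset V) : SimpleGraph {v // v ∈ s} :=
  G.comap Subtype.val

/-- The subgraph of `G` induced by the complement of `s`. -/
def inducedGraphC (G : SimpleGraph V) (s : Finset V) : SimpleGraph {v // v ∉ s} :=
  G.comap Subtype.val

/-- The product `U = ∏_{(i,j) ∈ Ẽ} CZ^{(i,j)}` of controlled-`Z` gates over the set `Ẽ`
of edges of `G` having exactly one endpoint in `s`. -/
def czCut (G : SimpleGraph V) (s : Finset V) : QMat V :=
  Matrix.diagonal fun f =>
    (-1 : ℂ) ^ ((Finset.univ : Finset (Sym2 V)).filter fun e =>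
        e ∈ G.edgeSet ∧ (∀ v ∈ e, f v = true) ∧ (∃ v ∈ e, v ∈ s) ∧ (∃ v ∈ e, v ∉ s)).card

/-- Tensor product of an operator on the qubits in `s` with an operator on the
complementary qubits, as an operator on the full system. -/
def tensorSplit (s : Finset V)
    (A : Matrix ({v // v ∈ s} → Bool) ({v // v ∈ s} → Bool) ℂ)
    (B : Matrix ({v // v ∉ s} → Bool) ({v // v ∉ s} → Bool) ℂ) : QMat V :=
  Matrix.of fun f g =>
    A (fun v => f v.1) (fun v => g v.1) * B (fun v => f v.1) (fun v => g v.1)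

/-- `ρ` is a pure state: the outer product of a normalized vector. -/
def IsPure {ι : Type} [Fintype ι] (ρ : Matrix ι ι ℂ) : Prop :=
  ∃ v : ι → ℂ, (∑ x, Complex.normSq (v x)) = 1 ∧ ρ = outer v

/-- `ρ` is separable with respect to the bipartition `(s, sᶜ)` of the qubits:
a probabilistic mixture of tensor products of pure states of the two subsystems. -/
def SeparableWrt (s : Finset V) (ρ : QMat V) : Prop :=
  ∃ (ι : Type) (_ : Fintype ι) (p : ι → ℝ)
    (a : ι → Matrix ({v // v ∈ s} → Bool) ({v // v ∈ s} → Bool) ℂ)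
    (b : ι → Matrix ({v // v ∉ s} → Bool) ({v // v ∉ s} → Bool) ℂ),
    (∀ k, 0 ≤ p k) ∧ (∑ k, p k) = 1 ∧
    (∀ k, IsPure (a k) ∧ IsPure (b k)) ∧
    ρ = ∑ k, (p k : ℂ) • tensorSplit s (a k) (b k)

/-- `ρ` is biseparable: a convex mixture of states, each separable with respect to
some (nontrivial) bipartition of the qubits. -/
def Biseparable (ρ : QMat V) : Prop :=
  ∃ (ι : Type) (_ : Fintype ι) (q : ι → ℝ) (A : ι → Finset V) (σ : ι → QMat V),
    (∀ k, 0 ≤ q k) ∧ (∑ k, q k) = 1 ∧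
    (∀ k, (A k).Nonempty ∧ A k ≠ Finset.univ ∧ SeparableWrt (A k) (σ k)) ∧
    ρ = ∑ k, (q k : ℂ) • σ k

/-- `𝒱` is a partition of the vertex subset `t` into nonempty pairwise disjoint blocks. -/
def IsPartitionOn (t : Finset V) (𝒱 : Finset (Finset V)) : Prop :=
  (∀ B ∈ 𝒱, B.Nonempty) ∧
  ((𝒱 : Set (Finset V)).Pairwise fun B C => Disjoint B C) ∧
  𝒱.sup id = t

/-- The entanglement witness `W(𝒱,G) = (k − 1/2) I − ∑_{B ∈ 𝒱} P(B,G)`. -/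
def witnessW (G : SimpleGraph V) (𝒱 : Finset (Finset V)) : QMat V :=
  ((𝒱.card : ℂ) - 1/2) • 1 - ∑ B ∈ 𝒱, stabProj G B

/-- The white-noise-mixed state `ρ(p) = (1−p) ρ₀ + p I / 2^n`. -/
def whiteNoise (ρ0 : QMat V) (p : ℝ) : QMat V :=
  ((1 - p : ℝ) : ℂ) • ρ0 + ((p : ℂ) / (2 ^ Fintype.card V)) • 1

/-- The element `∏_i S_i^{x_i}` of the stabilizer group of `|G⟩`. -/
def stabElem (G : SimpleGraph V) (x : V → Bool) : QMat V :=
  prodOn (Finset.univ.filter fun i => x i = true) (stab G)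

/-- The stabilizer generator of the induced subgraph `G' = G[s]`, extended by
identity to the full system: `S_i' = X_i ∏_{j ∈ N_i ∩ s} Z_j`. -/
def subStab (G : SimpleGraph V) (s : Finset V) (i : V) : QMat V :=
  pauliX i * zOn ((Finset.univ.filter fun j => G.Adj i j) ∩ s)



/- ==================== Auxiliary machinery ==================== -/

set_option linter.unusedSectionVars false

/-- the sign character of a proposition -/
def chi (P : Prop) : ℂ := if P then -1 else 1

lemma chi_of_not {P : Prop} (h : ¬P) : chi P = 1 := if_neg h

lemma chi_sq (P : Prop) : chi P * chi P = 1 := by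
  by_cases h : P <;> simp [chi, h]

lemma chi_congr {P Q : Prop} (h : P ↔ Q) : chi P = chi Q := by
  by_cases hp : P
  · rw [chi, if_pos hp, chi, if_pos (h.1 hp)]
  · rw [chi, if_neg hp, chi, if_neg (fun hq => hp (h.2 hq))]

lemma neg_one_pow_card_eq_prod {α : Type} [Fintype α] (p : α → Prop) [DecidablePred p] :
    ((-1:ℂ)) ^ ((Finset.univ : Finset α).filter p).card = ∏ x : α, chi (p x) := by
  rw [← Finset.prod_const, Finset.prod_filter]
  refine Finset.prod_congr rfl fun x _ => ?_
  by_cases h : p x <;> simp [chi, h]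

lemma all_pair (h : V → Bool) (x y : V) :
    (∀ u ∈ s(x,y), h u = true) ↔ (h x = true ∧ h y = true) := by
  constructor
  · intro H; exact ⟨H x (Sym2.mem_mk_left x y), H y (Sym2.mem_mk_right x y)⟩
  · rintro ⟨h1, h2⟩ u hu
    rcases Sym2.mem_iff.1 hu with rfl | rfl <;> assumption

lemma exists_pair (p : V → Prop) (x y : V) :
    (∃ u ∈ s(x,y), p u) ↔ p x ∨ p y := by
  constructor
  · rintro ⟨u, hu, hp⟩
    rcases Sym2.mem_iff.1 hu with rfl | rfl
    · exact Or.inl hp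
    · exact Or.inr hp
  · rintro (h | h)
    · exact ⟨x, Sym2.mem_mk_left x y, h⟩
    · exact ⟨y, Sym2.mem_mk_right x y, h⟩

/-- phase of the edges of `G` fully set in `h` and touching the list `l` -/
def phaseL (G : SimpleGraph V) (l : List V) (h : V → Bool) : ℂ :=
  (-1 : ℂ) ^ ((Finset.univ : Finset (Sym2 V)).filter fun e =>
      e ∈ G.edgeSet ∧ (∀ v ∈ e, h v = true) ∧ ∃ v ∈ e, v ∈ l).card

lemma phaseL_eq_prod (G : SimpleGraph V) (l : List V) (h : V → Bool) :
    phaseL G l h = ∏ e : Sym2 V,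
      chi (e ∈ G.edgeSet ∧ (∀ v ∈ e, h v = true) ∧ ∃ v ∈ e, v ∈ l) := by
  rw [phaseL, neg_one_pow_card_eq_prod]

lemma stab_apply (G : SimpleGraph V) (i : V) (f g : V → Bool) :
    stab G i f g = (if f = Function.update g i (!g i) then 1 else 0) *
      (-1:ℂ) ^ (((Finset.univ.filter fun j => G.Adj i j)).filter fun j => g j = true).card := by
  rw [stab, zOn, Matrix.mul_diagonal]; rfl

lemma zcount (G : SimpleGraph V) (i : V) (h : V → Bool) :
    (((Finset.univ.filter fun j => G.Adj i j)).filter fun j => h j = true).card =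
    ((Finset.univ : Finset (Sym2 V)).filter fun e =>
      e ∈ G.edgeSet ∧ i ∈ e ∧ ∀ u ∈ e, Function.update h i true u = true).card := by
  apply Finset.card_bij (fun j _ => s(i, j))
  · intro j hj
    simp only [Finset.mem_filter, Finset.mem_univ, true_and] at hj ⊢
    refine ⟨G.mem_edgeSet.2 hj.1, Sym2.mem_mk_left i j, ?_⟩
    intro u hu
    rcases Sym2.mem_iff.1 hu with rfl | rfl
    · simp
    · rw [Function.update_of_ne (G.ne_of_adj hj.1).symm]
      exact hj.2
  · intro j₁ h₁ j₂ h₂ hs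
    exact (Sym2.congr_right).1 hs
  · intro e he
    simp only [Finset.mem_filter, Finset.mem_univ, true_and] at he
    obtain ⟨j, rfl⟩ := Sym2.mem_iff_exists.1 he.2.1
    have hadj : G.Adj i j := G.mem_edgeSet.1 he.1
    refine ⟨j, ?_, rfl⟩
    simp only [Finset.mem_filter, Finset.mem_univ, true_and]
    refine ⟨hadj, ?_⟩
    have := he.2.2 j (Sym2.mem_mk_right i j)
    rwa [Function.update_of_ne (G.ne_of_adj hadj).symm] at this

lemma flip_iff (f h : V → Bool) (v : V) :
    f = Function.update h v (!h v) ↔ h = Function.update f v (!f v) := by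
  constructor <;> (rintro rfl; funext u; by_cases hu : u = v)
  · subst hu; simp [Function.update_idem]
  · simp [Function.update_of_ne hu]
  · subst hu; simp [Function.update_idem]
  · simp [Function.update_of_ne hu]

lemma ne_flip (f : V → Bool) (v : V) : f ≠ Function.update f v (!f v) := by
  intro h
  have := congrFun h v
  simp at this

lemma perEdgeA (G : SimpleGraph V) (v : V) (t : List V) (f g : V → Bool)
    (hfg : ∀ u, u ∉ t → f u = g u) (e : Sym2 V) :
    chi (e ∈ G.edgeSet ∧ (∀ u ∈ e, f u = true) ∧ ∃ u ∈ e, u ∈ v :: t) *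
    chi (e ∈ G.edgeSet ∧ (∀ u ∈ e, g u = true) ∧ ∃ u ∈ e, u ∈ v :: t) =
    chi (e ∈ G.edgeSet ∧ (∀ u ∈ e, f u = true) ∧ ∃ u ∈ e, u ∈ t) *
    chi (e ∈ G.edgeSet ∧ (∀ u ∈ e, g u = true) ∧ ∃ u ∈ e, u ∈ t) := by
  induction e using Sym2.inductionOn with
  | _ x y =>
  by_cases hE : s(x,y) ∈ G.edgeSet
  · by_cases hT : x ∈ t ∨ y ∈ t
    · have h1 : (∃ u ∈ s(x,y), u ∈ v :: t) := by
        rw [exists_pair]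
        rcases hT with h | h
        · exact Or.inl (List.mem_cons_of_mem v h)
        · exact Or.inr (List.mem_cons_of_mem v h)
      have h2 : (∃ u ∈ s(x,y), u ∈ t) := (exists_pair _ x y).2 hT
      rw [chi_congr (show (s(x,y) ∈ G.edgeSet ∧ (∀ u ∈ s(x,y), f u = true) ∧ ∃ u ∈ s(x,y), u ∈ v :: t)
            ↔ (s(x,y) ∈ G.edgeSet ∧ (∀ u ∈ s(x,y), f u = true) ∧ ∃ u ∈ s(x,y), u ∈ t) by tauto),
          chi_congr (show (s(x,y) ∈ G.edgeSet ∧ (∀ u ∈ s(x,y), g u = true) ∧ ∃ u ∈ s(x,y), u ∈ v :: t)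
            ↔ (s(x,y) ∈ G.edgeSet ∧ (∀ u ∈ s(x,y), g u = true) ∧ ∃ u ∈ s(x,y), u ∈ t) by tauto)]
    · push_neg at hT
      have hfx : f x = g x := hfg x hT.1
      have hfy : f y = g y := hfg y hT.2
      have hno : ¬ (∃ u ∈ s(x,y), u ∈ t) := by
        rw [exists_pair]; push_neg; exact hT
      rw [chi_congr (show (s(x,y) ∈ G.edgeSet ∧ (∀ u ∈ s(x,y), g u = true) ∧ ∃ u ∈ s(x,y), u ∈ v :: t)
            ↔ (s(x,y) ∈ G.edgeSet ∧ (∀ u ∈ s(x,y), f u = true) ∧ ∃ u ∈ s(x,y), u ∈ v :: t) by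
          rw [all_pair, all_pair, hfx, hfy])]
      rw [chi_sq]
      rw [chi_of_not (fun hc => hno hc.2.2), chi_of_not (fun hc => hno hc.2.2), one_mul]
  · rw [chi_of_not (fun hc => hE hc.1), chi_of_not (fun hc => hE hc.1),
        chi_of_not (fun hc => hE hc.1), chi_of_not (fun hc => hE hc.1)]


lemma perEdgeB (G : SimpleGraph V) (v : V) (t : List V) (hv : v ∉ t) (f g : V → Bool)
    (hfg : ∀ u, u ∉ v :: t → f u = g u) (hgv : g v = !f v) (e : Sym2 V) :
    chi (e ∈ G.edgeSet ∧ v ∈ e ∧ ∀ u ∈ e, Function.update f v true u = true) *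
    chi (e ∈ G.edgeSet ∧ (∀ u ∈ e, Function.update f v (!f v) u = true) ∧ ∃ u ∈ e, u ∈ t) *
    chi (e ∈ G.edgeSet ∧ (∀ u ∈ e, g u = true) ∧ ∃ u ∈ e, u ∈ t) =
    chi (e ∈ G.edgeSet ∧ (∀ u ∈ e, f u = true) ∧ ∃ u ∈ e, u ∈ v :: t) *
    chi (e ∈ G.edgeSet ∧ (∀ u ∈ e, g u = true) ∧ ∃ u ∈ e, u ∈ v :: t) := by
  induction e using Sym2.inductionOn with
  | _ x y =>
  by_cases hE : s(x,y) ∈ G.edgeSet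
  swap
  · rw [chi_of_not (fun hc => hE hc.1), chi_of_not (fun hc => hE hc.1),
        chi_of_not (fun hc => hE hc.1), chi_of_not (fun hc => hE hc.1),
        chi_of_not (fun hc => hE hc.1)]
    norm_num
  have hne : x ≠ y := (G.ne_of_adj (G.mem_edgeSet.1 hE))
  -- helper rewrites
  have hmem : ∀ u : V, u ∈ (v :: t) ↔ (u = v ∨ u ∈ t) := fun u => List.mem_cons
  by_cases hxv : x = v
  · subst hxv
    have hyx : y ≠ x := fun h => hne h.symm
    have hgy' : y ∉ t → f y = g y := fun h => hfg y (by
      intro hc; rcases List.mem_cons.1 hc with h' | h'; exact hyx h'; exact h h')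
    -- conditions
    have c1 : (s(x,y) ∈ G.edgeSet ∧ x ∈ s(x,y) ∧ ∀ u ∈ s(x,y), Function.update f x true u = true)
        ↔ (f y = true) := by
      rw [all_pair]
      simp [hE, Function.update_of_ne hyx, Sym2.mem_mk_left]
    have c2 : (s(x,y) ∈ G.edgeSet ∧ (∀ u ∈ s(x,y), Function.update f x (!f x) u = true) ∧ ∃ u ∈ s(x,y), u ∈ t)
        ↔ ((!f x) = true ∧ f y = true ∧ y ∈ t) := by
      rw [all_pair, exists_pair]
      simp only [Function.update_self, Function.update_of_ne hyx]
      constructor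
      · rintro ⟨_, ⟨h1, h2⟩, (h3 | h3)⟩
        · exact absurd h3 hv
        · exact ⟨h1, h2, h3⟩
      · rintro ⟨h1, h2, h3⟩; exact ⟨hE, ⟨h1, h2⟩, Or.inr h3⟩
    have c3 : (s(x,y) ∈ G.edgeSet ∧ (∀ u ∈ s(x,y), g u = true) ∧ ∃ u ∈ s(x,y), u ∈ t)
        ↔ ((!f x) = true ∧ g y = true ∧ y ∈ t) := by
      rw [all_pair, exists_pair, hgv]
      constructor
      · rintro ⟨_, ⟨h1, h2⟩, (h3 | h3)⟩
        · exact absurd h3 hv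
        · exact ⟨h1, h2, h3⟩
      · rintro ⟨h1, h2, h3⟩; exact ⟨hE, ⟨h1, h2⟩, Or.inr h3⟩
    have c4 : (s(x,y) ∈ G.edgeSet ∧ (∀ u ∈ s(x,y), f u = true) ∧ ∃ u ∈ s(x,y), u ∈ x :: t)
        ↔ (f x = true ∧ f y = true) := by
      rw [all_pair, exists_pair]
      simp [hE, List.mem_cons]
    have c5 : (s(x,y) ∈ G.edgeSet ∧ (∀ u ∈ s(x,y), g u = true) ∧ ∃ u ∈ s(x,y), u ∈ x :: t)
        ↔ ((!f x) = true ∧ g y = true) := by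
      rw [all_pair, exists_pair, hgv]
      simp [hE, List.mem_cons]
    rw [chi_congr c1, chi_congr c2, chi_congr c3, chi_congr c4, chi_congr c5]
    by_cases hyt : y ∈ t
    · have := hgy'
      cases hb : f x <;> cases hc : f y <;> cases hd : g y <;> simp [chi, hyt]
    · have hfgy : f y = g y := hgy' hyt
      rw [← hfgy]
      cases hb : f x <;> cases hc : f y <;> simp [chi, hyt]
  · by_cases hyv : y = v
    · subst hyv
      have hgx' : x ∉ t → f x = g x := fun h => hfg x (by
        intro hc; rcases List.mem_cons.1 hc with h' | h'; exact hxv h'; exact h h')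
      have c1 : (s(x,y) ∈ G.edgeSet ∧ y ∈ s(x,y) ∧ ∀ u ∈ s(x,y), Function.update f y true u = true)
          ↔ (f x = true) := by
        rw [all_pair]
        simp [hE, Function.update_of_ne hxv, Sym2.mem_mk_right]
      have c2 : (s(x,y) ∈ G.edgeSet ∧ (∀ u ∈ s(x,y), Function.update f y (!f y) u = true) ∧ ∃ u ∈ s(x,y), u ∈ t)
          ↔ ((!f y) = true ∧ f x = true ∧ x ∈ t) := by
        rw [all_pair, exists_pair]
        simp only [Function.update_self, Function.update_of_ne hxv]
        constructor
        · rintro ⟨_, ⟨h1, h2⟩, (h3 | h3)⟩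
          · exact ⟨h2, h1, h3⟩
          · exact absurd h3 hv
        · rintro ⟨h1, h2, h3⟩; exact ⟨hE, ⟨h2, h1⟩, Or.inl h3⟩
      have c3 : (s(x,y) ∈ G.edgeSet ∧ (∀ u ∈ s(x,y), g u = true) ∧ ∃ u ∈ s(x,y), u ∈ t)
          ↔ ((!f y) = true ∧ g x = true ∧ x ∈ t) := by
        rw [all_pair, exists_pair, hgv]
        constructor
        · rintro ⟨_, ⟨h1, h2⟩, (h3 | h3)⟩
          · exact ⟨h2, h1, h3⟩
          · exact absurd h3 hv
        · rintro ⟨h1, h2, h3⟩; exact ⟨hE, ⟨h2, h1⟩, Or.inl h3⟩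
      have c4 : (s(x,y) ∈ G.edgeSet ∧ (∀ u ∈ s(x,y), f u = true) ∧ ∃ u ∈ s(x,y), u ∈ y :: t)
          ↔ (f y = true ∧ f x = true) := by
        rw [all_pair, exists_pair]
        simp [hE, List.mem_cons, and_comm]
      have c5 : (s(x,y) ∈ G.edgeSet ∧ (∀ u ∈ s(x,y), g u = true) ∧ ∃ u ∈ s(x,y), u ∈ y :: t)
          ↔ ((!f y) = true ∧ g x = true) := by
        rw [all_pair, exists_pair, hgv]
        simp [hE, List.mem_cons, and_comm]
      rw [chi_congr c1, chi_congr c2, chi_congr c3, chi_congr c4, chi_congr c5]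
      by_cases hxt : x ∈ t
      · cases hb : f y <;> cases hc : f x <;> cases hd : g x <;> simp [chi, hxt]
      · have hfgx : f x = g x := hgx' hxt
        rw [← hfgx]
        cases hb : f y <;> cases hc : f x <;> simp [chi, hxt]
    · -- v not an endpoint
      have hfx : Function.update f v (!f v) x = f x := Function.update_of_ne hxv _ f
      have hfy : Function.update f v (!f v) y = f y := Function.update_of_ne hyv _ f
      have c1 : ¬ (s(x,y) ∈ G.edgeSet ∧ v ∈ s(x,y) ∧ ∀ u ∈ s(x,y), Function.update f v true u = true) := by
        rintro ⟨_, hvm, _⟩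
        rcases Sym2.mem_iff.1 hvm with rfl | rfl
        · exact hxv rfl
        · exact hyv rfl
      have c2 : (s(x,y) ∈ G.edgeSet ∧ (∀ u ∈ s(x,y), Function.update f v (!f v) u = true) ∧ ∃ u ∈ s(x,y), u ∈ t)
          ↔ (s(x,y) ∈ G.edgeSet ∧ (∀ u ∈ s(x,y), f u = true) ∧ ∃ u ∈ s(x,y), u ∈ t) := by
        rw [all_pair, all_pair, hfx, hfy]
      have c4 : (s(x,y) ∈ G.edgeSet ∧ (∀ u ∈ s(x,y), f u = true) ∧ ∃ u ∈ s(x,y), u ∈ v :: t)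
          ↔ (s(x,y) ∈ G.edgeSet ∧ (∀ u ∈ s(x,y), f u = true) ∧ ∃ u ∈ s(x,y), u ∈ t) := by
        rw [exists_pair, exists_pair]
        constructor
        · rintro ⟨h1, h2, (h3 | h3)⟩
          · rcases List.mem_cons.1 h3 with h' | h'
            · exact absurd h' hxv
            · exact ⟨h1, h2, Or.inl h'⟩
          · rcases List.mem_cons.1 h3 with h' | h'
            · exact absurd h' hyv
            · exact ⟨h1, h2, Or.inr h'⟩
        · rintro ⟨h1, h2, (h3 | h3)⟩
          · exact ⟨h1, h2, Or.inl (List.mem_cons_of_mem v h3)⟩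
          · exact ⟨h1, h2, Or.inr (List.mem_cons_of_mem v h3)⟩
      have c5 : (s(x,y) ∈ G.edgeSet ∧ (∀ u ∈ s(x,y), g u = true) ∧ ∃ u ∈ s(x,y), u ∈ v :: t)
          ↔ (s(x,y) ∈ G.edgeSet ∧ (∀ u ∈ s(x,y), g u = true) ∧ ∃ u ∈ s(x,y), u ∈ t) := by
        rw [exists_pair, exists_pair]
        constructor
        · rintro ⟨h1, h2, (h3 | h3)⟩
          · rcases List.mem_cons.1 h3 with h' | h'
            · exact absurd h' hxv
            · exact ⟨h1, h2, Or.inl h'⟩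
          · rcases List.mem_cons.1 h3 with h' | h'
            · exact absurd h' hyv
            · exact ⟨h1, h2, Or.inr h'⟩
        · rintro ⟨h1, h2, (h3 | h3)⟩
          · exact ⟨h1, h2, Or.inl (List.mem_cons_of_mem v h3)⟩
          · exact ⟨h1, h2, Or.inr (List.mem_cons_of_mem v h3)⟩
      rw [chi_of_not c1, chi_congr c2, chi_congr c4, chi_congr c5, one_mul]


/-- Entries of the partial product of stabilizer projectors. -/
lemma prod_entry (G : SimpleGraph V) :
    ∀ l : List V, l.Nodup → ∀ f g : V → Bool,
      ((l.map fun v => (2:ℂ)⁻¹ • (1 + stab G v)).prod) f g =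
        if ∀ u, u ∉ l → f u = g u then
          ((2:ℂ)⁻¹) ^ l.length * phaseL G l f * phaseL G l g else 0 := by
  intro l
  induction l with
  | nil =>
    intro _ f g
    have h1 : ∀ h : V → Bool, phaseL G [] h = 1 := by
      intro h
      rw [phaseL]
      have : ((Finset.univ : Finset (Sym2 V)).filter fun e =>
          e ∈ G.edgeSet ∧ (∀ v ∈ e, h v = true) ∧ ∃ v ∈ e, v ∈ ([] : List V)) = ∅ := by
        apply Finset.filter_false_of_mem
        rintro e _ ⟨_, _, u, _, hu⟩
        exact (List.not_mem_nil (a := u)) hu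
      rw [this, Finset.card_empty, pow_zero]
    rw [List.map_nil, List.prod_nil, h1, h1]
    by_cases hfg : f = g
    · subst hfg
      rw [if_pos (fun u _ => rfl), Matrix.one_apply_eq, List.length_nil, pow_zero]
      ring
    · rw [Matrix.one_apply_ne hfg, if_neg]
      intro H
      exact hfg (funext fun u => H u (List.not_mem_nil (a := u)))
  | cons v t ih =>
    intro hnd f g
    have hv : v ∉ t := (List.nodup_cons.1 hnd).1
    have ht : t.Nodup := (List.nodup_cons.1 hnd).2
    rw [List.map_cons, List.prod_cons, Matrix.mul_apply]
    have hne : f ≠ Function.update f v (!f v) := ne_flip f v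
    have hf'v : Function.update f v (!f v) v = !f v := Function.update_self v (!f v) f
    -- the z-phase does not see the value at v
    have hzf : (((Finset.univ.filter fun j => G.Adj v j)).filter
          fun j => Function.update f v (!f v) j = true) =
        (((Finset.univ.filter fun j => G.Adj v j)).filter fun j => f j = true) := by
      apply Finset.filter_congr
      intro j hj
      simp only [Finset.mem_filter, Finset.mem_univ, true_and] at hj
      rw [Function.update_of_ne (G.ne_of_adj hj).symm]
    have hfactor : ∀ h : V → Bool,
        ((2:ℂ)⁻¹ • (1 + stab G v)) f h *
          ((t.map fun v => (2:ℂ)⁻¹ • (1 + stab G v)).prod) h g =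
        (if h = f then (2:ℂ)⁻¹ *
            ((t.map fun v => (2:ℂ)⁻¹ • (1 + stab G v)).prod) f g else 0) +
        (if h = Function.update f v (!f v) then (2:ℂ)⁻¹ *
            ((-1:ℂ) ^ (((Finset.univ.filter fun j => G.Adj v j)).filter
                fun j => f j = true).card) *
            ((t.map fun v => (2:ℂ)⁻¹ • (1 + stab G v)).prod)
              (Function.update f v (!f v)) g else 0) := by
      intro h
      rw [Matrix.smul_apply, Matrix.add_apply, Matrix.one_apply, stab_apply]
      by_cases h1 : h = f
      · subst h1
        rw [if_pos rfl, if_neg (ne_flip _ v), if_pos rfl, if_neg (ne_flip _ v), smul_eq_mul]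
        ring
      · by_cases h2 : h = Function.update f v (!f v)
        · rw [if_neg (fun hh => h1 hh.symm), if_pos ((flip_iff f h v).2 h2), if_neg h1, if_pos h2, h2, hzf]
          rw [smul_eq_mul]; ring
        · rw [if_neg (fun hh => h1 hh.symm), if_neg (fun hh => h2 ((flip_iff f h v).1 hh)),
            if_neg h1, if_neg h2]
          rw [smul_eq_mul]; ring
    rw [Finset.sum_congr rfl fun h _ => hfactor h, Finset.sum_add_distrib,
      Finset.sum_ite_eq' Finset.univ f, Finset.sum_ite_eq' Finset.univ (Function.update f v (!f v)),
      if_pos (Finset.mem_univ _), if_pos (Finset.mem_univ _)]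
    rw [ih ht f g, ih ht (Function.update f v (!f v)) g]
    by_cases hc : ∀ u, u ∉ v :: t → f u = g u
    · rw [if_pos hc]
      by_cases hfv : f v = g v
      · -- case A
        have hcfg : ∀ u, u ∉ t → f u = g u := by
          intro u hu
          by_cases huv : u = v
          · subst huv; exact hfv
          · exact hc u (fun hmem => (List.mem_cons.1 hmem).elim huv hu)
        have hnf' : ¬ ∀ u, u ∉ t → Function.update f v (!f v) u = g u := by
          intro H
          have := H v hv
          rw [hf'v, ← hfv] at this
          exact Bool.not_ne_self (f v) this
        rw [if_pos hcfg, if_neg hnf', mul_zero, add_zero]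
        have key : phaseL G (v::t) f * phaseL G (v::t) g = phaseL G t f * phaseL G t g := by
          rw [phaseL_eq_prod, phaseL_eq_prod, phaseL_eq_prod, phaseL_eq_prod,
            ← Finset.prod_mul_distrib, ← Finset.prod_mul_distrib]
          exact Finset.prod_congr rfl fun e _ => perEdgeA G v t f g hcfg e
        rw [List.length_cons]
        linear_combination (-(2:ℂ)⁻¹ ^ (t.length+1)) * key
      · -- case B
        have hgv : g v = !f v := by
          cases hb : f v <;> cases hbg : g v <;> simp_all
        have hnf : ¬ ∀ u, u ∉ t → f u = g u := by
          intro H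
          exact hfv (H v hv)
        have hcf' : ∀ u, u ∉ t → Function.update f v (!f v) u = g u := by
          intro u hu
          by_cases huv : u = v
          · subst huv; rw [hf'v, hgv]
          · rw [Function.update_of_ne huv]
            exact hc u (fun hmem => (List.mem_cons.1 hmem).elim huv hu)
        rw [if_neg hnf, if_pos hcf', mul_zero, zero_add]
        have hz : ((-1:ℂ) ^ (((Finset.univ.filter fun j => G.Adj v j)).filter
              fun j => f j = true).card) = ∏ e : Sym2 V,
            chi (e ∈ G.edgeSet ∧ v ∈ e ∧ ∀ u ∈ e, Function.update f v true u = true) := by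
          rw [zcount G v f, neg_one_pow_card_eq_prod]
        have key : ((-1:ℂ) ^ (((Finset.univ.filter fun j => G.Adj v j)).filter
              fun j => f j = true).card) *
            phaseL G t (Function.update f v (!f v)) * phaseL G t g =
            phaseL G (v::t) f * phaseL G (v::t) g := by
          rw [hz, phaseL_eq_prod, phaseL_eq_prod, phaseL_eq_prod, phaseL_eq_prod,
            ← Finset.prod_mul_distrib, ← Finset.prod_mul_distrib, ← Finset.prod_mul_distrib]
          exact Finset.prod_congr rfl fun e _ => perEdgeB G v t hv f g hc hgv e
        rw [List.length_cons]
        linear_combination ((2:ℂ)⁻¹ ^ (t.length+1)) * key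
    · rw [if_neg hc]
      push_neg at hc
      obtain ⟨u, hu1, hu2⟩ := hc
      have hunv : u ≠ v := fun h => hu1 (h ▸ List.mem_cons_self (a := v) (l := t))
      have hunt : u ∉ t := fun h => hu1 (List.mem_cons_of_mem v h)
      have h1 : ¬ ∀ w, w ∉ t → f w = g w := fun H => hu2 (H u hunt)
      have h2 : ¬ ∀ w, w ∉ t → Function.update f v (!f v) w = g w := by
        intro H
        have := H u hunt
        rw [Function.update_of_ne hunv] at this
        exact hu2 this
      rw [if_neg h1, if_neg h2]; ring

lemma merge_mem (s : Finset V) (a : {v // v ∈ s} → Bool) (h : {v // v ∉ s} → Bool)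
    {v : V} (hv : v ∈ s) : merge s a h v = a ⟨v, hv⟩ := dif_pos hv

lemma merge_not_mem (s : Finset V) (a : {v // v ∈ s} → Bool) (h : {v // v ∉ s} → Bool)
    {v : V} (hv : v ∉ s) : merge s a h v = h ⟨v, hv⟩ := dif_neg hv

def splitEquiv (s : Finset V) :
    (V → Bool) ≃ ({v // v ∈ s} → Bool) × ({v // v ∉ s} → Bool) where
  toFun f := (fun v => f v.1, fun v => f v.1)
  invFun p := merge s p.1 p.2
  left_inv f := by
    funext v
    show merge s (fun v => f v.1) (fun v => f v.1) v = f v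
    by_cases hv : v ∈ s
    · rw [merge_mem s _ _ hv]
    · rw [merge_not_mem s _ _ hv]
  right_inv p := by
    obtain ⟨a, h⟩ := p
    ext v
    · show merge s a h v.1 = a v
      rw [merge_mem s a h v.2]
    · show merge s a h v.1 = h v
      rw [merge_not_mem s a h v.2]

lemma sum_merge (s : Finset V) (F : (V → Bool) → ℂ) :
    ∑ f : V → Bool, F f =
      ∑ a : {v // v ∈ s} → Bool, ∑ h : {v // v ∉ s} → Bool, F (merge s a h) := by
  rw [← Equiv.sum_comp (splitEquiv s).symm F, Fintype.sum_prod_type]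
  rfl

lemma off_iff (s : Finset V) (a b : {v // v ∈ s} → Bool) (h h' : {v // v ∉ s} → Bool) :
    (∀ u, u ∉ s.toList → merge s a h u = merge s b h' u) ↔ h' = h := by
  constructor
  · intro H
    funext u
    have hus : u.1 ∉ s := u.2
    have h2 := H u.1 (fun hm => hus (Finset.mem_toList.1 hm))
    rw [merge_not_mem s a h hus, merge_not_mem s b h' hus] at h2
    exact h2.symm
  · rintro rfl u hu
    have hus : u ∉ s := fun h2 => hu (Finset.mem_toList.2 h2)
    rw [merge_not_mem s a _ hus, merge_not_mem s b _ hus]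

lemma card_split (G : SimpleGraph V) (s : Finset V) (a : {v // v ∈ s} → Bool)
    (h : {v // v ∉ s} → Bool) :
    ((Finset.univ : Finset (Sym2 V)).filter fun e =>
        e ∈ G.edgeSet ∧ (∀ v ∈ e, merge s a h v = true) ∧ ∃ v ∈ e, v ∈ s).card =
    ((Finset.univ : Finset (Sym2 {v // v ∈ s})).filter fun e =>
        e ∈ (inducedGraph G s).edgeSet ∧ ∀ v ∈ e, a v = true).card +
    ((Finset.univ : Finset (Sym2 V)).filter fun e =>
        e ∈ G.edgeSet ∧ (∀ v ∈ e, merge s a h v = true) ∧ (∃ v ∈ e, v ∈ s) ∧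
          ∃ v ∈ e, v ∉ s).card := by
  have hsplit := Finset.card_filter_add_card_filter_not
    (s := (Finset.univ : Finset (Sym2 V)).filter fun e =>
      e ∈ G.edgeSet ∧ (∀ v ∈ e, merge s a h v = true) ∧ ∃ v ∈ e, v ∈ s)
    (fun e => ∃ v ∈ e, v ∉ s)
  rw [Finset.filter_filter, Finset.filter_filter] at hsplit
  rw [← hsplit, add_comm]
  congr 1
  · -- inside part
    symm
    apply Finset.card_bij (fun (e : Sym2 {v // v ∈ s}) (_ : e ∈ _) => Sym2.map Subtype.val e)
    · intro e he
      revert he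
      induction e using Sym2.inductionOn with
      | _ i j =>
      intro he
      simp only [Finset.mem_filter, Finset.mem_univ, true_and] at he
      obtain ⟨hij, hall⟩ := he
      have hadj : G.Adj i.1 j.1 := (inducedGraph G s).mem_edgeSet.1 hij
      simp only [Finset.mem_filter, Finset.mem_univ, true_and, Sym2.map_pair_eq]
      refine ⟨⟨G.mem_edgeSet.2 hadj, ?_, ⟨i.1, Sym2.mem_mk_left _ _, i.2⟩⟩, ?_⟩
      · intro u hu
        rcases Sym2.mem_iff.1 hu with rfl | rfl
        · rw [merge_mem s a h i.2]
          exact hall i (Sym2.mem_mk_left _ _)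
        · rw [merge_mem s a h j.2]
          exact hall j (Sym2.mem_mk_right _ _)
      · rintro ⟨u, hu, hus⟩
        rcases Sym2.mem_iff.1 hu with rfl | rfl
        · exact hus i.2
        · exact hus j.2
    · intro e1 h1 e2 h2 heq
      exact Sym2.map.injective Subtype.val_injective heq
    · intro e he
      revert he
      induction e using Sym2.inductionOn with
      | _ x y =>
      intro he
      simp only [Finset.mem_filter, Finset.mem_univ, true_and] at he
      obtain ⟨⟨hE, hall, _⟩, hins⟩ := he
      have hx : x ∈ s := by
        by_contra hx
        exact hins ⟨x, Sym2.mem_mk_left _ _, hx⟩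
      have hy : y ∈ s := by
        by_contra hy
        exact hins ⟨y, Sym2.mem_mk_right _ _, hy⟩
      refine ⟨s(⟨x, hx⟩, ⟨y, hy⟩), ?_, by rw [Sym2.map_pair_eq]⟩
      simp only [Finset.mem_filter, Finset.mem_univ, true_and]
      constructor
      · exact (inducedGraph G s).mem_edgeSet.2 (G.mem_edgeSet.1 hE)
      · intro u hu
        rcases Sym2.mem_iff.1 hu with rfl | rfl
        · rw [← merge_mem s a h hx]
          exact hall x (Sym2.mem_mk_left _ _)
        · rw [← merge_mem s a h hy]
          exact hall y (Sym2.mem_mk_right _ _)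

  · -- cut part

    apply congrArg
    apply Finset.filter_congr
    intro e _
    constructor
    · rintro ⟨h1, h2, h3⟩; exact ⟨h1.1, h1.2.1, h1.2.2, h2, h3⟩
    · rintro ⟨h1, h2, h3, h4⟩; exact ⟨⟨h1, h2, h3⟩, h4⟩
lemma phase_merge (G : SimpleGraph V) (s : Finset V) (a : {v // v ∈ s} → Bool)
    (h : {v // v ∉ s} → Bool) :
    phaseL G s.toList (merge s a h) =
      ((-1:ℂ) ^ ((Finset.univ : Finset (Sym2 {v // v ∈ s})).filter fun e =>
          e ∈ (inducedGraph G s).edgeSet ∧ ∀ v ∈ e, a v = true).card) *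
      ((-1:ℂ) ^ ((Finset.univ : Finset (Sym2 V)).filter fun e =>
          e ∈ G.edgeSet ∧ (∀ v ∈ e, merge s a h v = true) ∧ (∃ v ∈ e, v ∈ s) ∧
            ∃ v ∈ e, v ∉ s).card) := by
  rw [phaseL]
  have hcong : ((Finset.univ : Finset (Sym2 V)).filter fun e =>
      e ∈ G.edgeSet ∧ (∀ v ∈ e, merge s a h v = true) ∧ ∃ v ∈ e, v ∈ s.toList) =
      ((Finset.univ : Finset (Sym2 V)).filter fun e =>
      e ∈ G.edgeSet ∧ (∀ v ∈ e, merge s a h v = true) ∧ ∃ v ∈ e, v ∈ s) := by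
    apply Finset.filter_congr
    intro e _
    simp [Finset.mem_toList]
  rw [hcong, card_split G s a h, pow_add]


/-- for any density operator `ρ`,
`tr(P(V',G) ρ) = tr(|G'⟩⟨G'| ρ̂^{V'})` where `ρ̂ = U ρ U`. -/
theorem trace_stabProj_eq_trace_reduced (G : SimpleGraph V) (s : Finset V)
    (ρ : QMat V) (hρ : ρ.PosSemidef) (htr : ρ.trace = 1) :
    Matrix.trace (stabProj G s * ρ) =
      Matrix.trace (outer (graphStateVec (inducedGraph G s)) *
        ptrace s (czCut G s * ρ * czCut G s)) := by
  classical
  set ein : ({v // v ∈ s} → Bool) → ℂ := fun a =>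
    (-1:ℂ) ^ ((Finset.univ : Finset (Sym2 {v // v ∈ s})).filter fun e =>
      e ∈ (inducedGraph G s).edgeSet ∧ ∀ v ∈ e, a v = true).card with hein
  set dcut : (V → Bool) → ℂ := fun x =>
    (-1:ℂ) ^ ((Finset.univ : Finset (Sym2 V)).filter fun e =>
      e ∈ G.edgeSet ∧ (∀ v ∈ e, x v = true) ∧ (∃ v ∈ e, v ∈ s) ∧ ∃ v ∈ e, v ∉ s).card with hdcut
  have hczCut : czCut G s = Matrix.diagonal dcut := rfl
  have hphm : ∀ (a : {v // v ∈ s} → Bool) (h : {v // v ∉ s} → Bool),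
      phaseL G s.toList (merge s a h) = ein a * dcut (merge s a h) :=
    fun a h => phase_merge G s a h
  have hL : Matrix.trace (stabProj G s * ρ) =
      ∑ a : {v // v ∈ s} → Bool, ∑ h : {v // v ∉ s} → Bool, ∑ b : {v // v ∈ s} → Bool,
        ((2:ℂ)⁻¹) ^ s.card * (ein a * dcut (merge s a h)) *
          (ein b * dcut (merge s b h)) * ρ (merge s b h) (merge s a h) := by
    have h0 : Matrix.trace (stabProj G s * ρ) =
        ∑ f : V → Bool, ∑ g : V → Bool, stabProj G s f g * ρ g f := by
      simp only [Matrix.trace, Matrix.diag, Matrix.mul_apply]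
    rw [h0]
    calc ∑ f : V → Bool, ∑ g : V → Bool, stabProj G s f g * ρ g f
        = ∑ a : {v // v ∈ s} → Bool, ∑ h : {v // v ∉ s} → Bool, ∑ g : V → Bool,
            stabProj G s (merge s a h) g * ρ g (merge s a h) := sum_merge s _
      _ = ∑ a : {v // v ∈ s} → Bool, ∑ h : {v // v ∉ s} → Bool, ∑ b : {v // v ∈ s} → Bool,
            ∑ h' : {v // v ∉ s} → Bool,
            stabProj G s (merge s a h) (merge s b h') * ρ (merge s b h') (merge s a h) := by
          refine Finset.sum_congr rfl fun a _ => Finset.sum_congr rfl fun h _ => ?_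
          exact sum_merge s _
      _ = ∑ a : {v // v ∈ s} → Bool, ∑ h : {v // v ∉ s} → Bool, ∑ b : {v // v ∈ s} → Bool,
            ∑ h' : {v // v ∉ s} → Bool,
            (if h' = h then ((2:ℂ)⁻¹) ^ s.toList.length * phaseL G s.toList (merge s a h) *
              phaseL G s.toList (merge s b h') * ρ (merge s b h') (merge s a h) else 0) := by
          refine Finset.sum_congr rfl fun a _ => Finset.sum_congr rfl fun h _ =>
            Finset.sum_congr rfl fun b _ => Finset.sum_congr rfl fun h' _ => ?_
          rw [show stabProj G s = ((s.toList.map fun v => (2:ℂ)⁻¹ • (1 + stab G v)).prod) from rfl,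
            prod_entry G s.toList (Finset.nodup_toList s), ite_mul, zero_mul]
          exact if_congr (off_iff s a b h h') rfl rfl
      _ = ∑ a : {v // v ∈ s} → Bool, ∑ h : {v // v ∉ s} → Bool, ∑ b : {v // v ∈ s} → Bool,
            ((2:ℂ)⁻¹) ^ s.toList.length * phaseL G s.toList (merge s a h) *
              phaseL G s.toList (merge s b h) * ρ (merge s b h) (merge s a h) := by
          refine Finset.sum_congr rfl fun a _ => Finset.sum_congr rfl fun h _ =>
            Finset.sum_congr rfl fun b _ => ?_
          rw [Finset.sum_ite_eq' Finset.univ h, if_pos (Finset.mem_univ h)]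
      _ = _ := by
          refine Finset.sum_congr rfl fun a _ => Finset.sum_congr rfl fun h _ =>
            Finset.sum_congr rfl fun b _ => ?_
          rw [Finset.length_toList, hphm a h, hphm b h]
  have hR : Matrix.trace (outer (graphStateVec (inducedGraph G s)) *
        ptrace s (czCut G s * ρ * czCut G s)) =
      ∑ a : {v // v ∈ s} → Bool, ∑ b : {v // v ∈ s} → Bool, ∑ h : {v // v ∉ s} → Bool,
        ((2:ℂ)⁻¹) ^ s.card * (ein a * ein b) *
          (dcut (merge s b h) * ρ (merge s b h) (merge s a h) * dcut (merge s a h)) := by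
    have h0 : Matrix.trace (outer (graphStateVec (inducedGraph G s)) *
          ptrace s (czCut G s * ρ * czCut G s)) =
        ∑ a : {v // v ∈ s} → Bool, ∑ b : {v // v ∈ s} → Bool,
          outer (graphStateVec (inducedGraph G s)) a b *
            ptrace s (czCut G s * ρ * czCut G s) b a := by
      simp only [Matrix.trace, Matrix.diag, Matrix.mul_apply]
    rw [h0]
    refine Finset.sum_congr rfl fun a _ => Finset.sum_congr rfl fun b _ => ?_
    have hp2 : ((Real.sqrt 2 : ℂ))⁻¹ * ((Real.sqrt 2 : ℂ))⁻¹ = (2:ℂ)⁻¹ := by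
      rw [← mul_inv, ← Complex.ofReal_mul, Real.mul_self_sqrt (by norm_num : (0:ℝ) ≤ 2)]
      norm_num
    have hv : ∀ c : {v // v ∈ s} → Bool, graphStateVec (inducedGraph G s) c =
        ein c * ((Real.sqrt 2 : ℂ))⁻¹ ^ s.card := by
      intro c
      rw [graphStateVec, show czProd (inducedGraph G s) = Matrix.diagonal ein from rfl,
        Matrix.mulVec_diagonal,
        show plusVec c = ((Real.sqrt 2 : ℂ))⁻¹ ^ Fintype.card {v // v ∈ s} from rfl,
        Fintype.card_coe]
    have hce : (starRingEnd ℂ) (ein b) = ein b := by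
      rw [hein]; simp
    have houter : outer (graphStateVec (inducedGraph G s)) a b =
        ((2:ℂ)⁻¹) ^ s.card * (ein a * ein b) := by
      show graphStateVec (inducedGraph G s) a *
        (starRingEnd ℂ) (graphStateVec (inducedGraph G s) b) = _
      rw [hv a, hv b]
      simp only [_root_.map_mul, map_pow, map_inv₀, Complex.conj_ofReal, hce]
      have hpow : ((Real.sqrt 2 : ℂ))⁻¹ ^ s.card * ((Real.sqrt 2 : ℂ))⁻¹ ^ s.card
          = (2:ℂ)⁻¹ ^ s.card := by
        rw [← mul_pow, hp2]
      linear_combination (ein a * ein b) * hpow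
    have hpt : ptrace s (czCut G s * ρ * czCut G s) b a =
        ∑ h : {v // v ∉ s} → Bool,
          dcut (merge s b h) * ρ (merge s b h) (merge s a h) * dcut (merge s a h) := by
      show (∑ h : {v // v ∉ s} → Bool,
        (czCut G s * ρ * czCut G s) (merge s b h) (merge s a h)) = _
      refine Finset.sum_congr rfl fun h _ => ?_
      rw [hczCut, Matrix.mul_diagonal, Matrix.diagonal_mul]
    rw [houter, hpt, Finset.mul_sum]
  rw [hL, hR]
  refine Finset.sum_congr rfl fun a _ => ?_
  rw [Finset.sum_comm]
  refine Finset.sum_congr rfl fun b _ => Finset.sum_congr rfl fun h _ => ?_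
  ring


end GraphStates
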